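/- Let f : [0,1]² → ℝ be a bounded, continuous, strictly positive density and let r, c : [0,1] → ℝ be strictly positive continuous functions with ∫₀¹ r(y) dy = ∫₀¹ c(x) dx. Then there exist strictly positive functions h₁, h₂ on [0,1] such that p(x,y) = h₁(x) f(x,y) h₂(y) satisfies ∫₀¹ p(x,y) dx = r(y) for all y and ∫₀¹ p(x,y) dy = c(x) for all x; the pair (h₁, h₂) is unique up to a scalar factor (if (h₁′, h₂′) also works then h₁′ = α h₁ and α h₂′ = h₂ for some α > 0). In particular, if f is symmetric (f(x,y) = f(y,x)) and r = c = m, there exists a unique strictly positive function h such that p(x,y) = h(x) f(x,y) h(y) has both marginals equal to m. -/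

import Mathlib

open MeasureTheory

open Set intervalIntegral Real Function

open MeasureTheory Set intervalIntegral Real

lemma lam_lemma (t C : ℝ) (ht0 : 0 < t) (ht1 : t ≤ 1) (hC : 0 < C) :
    ∃ lam : ℝ, 0 ≤ lam ∧ lam < 1 ∧
      ∀ D, 0 ≤ D → D ≤ C → Real.log (t + (1-t) * Real.exp D) ≤ lam * D := by
  have hGpos : ∀ D : ℝ, 0 < t + (1-t) * Real.exp D := by
    intro D
    have := Real.exp_pos D
    nlinarith
  set lam := (1-t) * Real.exp C / (t + (1-t) * Real.exp C) with hlam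
  have hden : 0 < t + (1-t) * Real.exp C := hGpos C
  refine ⟨lam, ?_, ?_, ?_⟩
  · apply div_nonneg _ hden.le
    have := Real.exp_pos C
    nlinarith
  · rw [div_lt_one hden]; linarith
  · intro D hD0 hDC
    set F : ℝ → ℝ := fun D => lam * D - Real.log (t + (1-t) * Real.exp D) with hF
    have hder : ∀ x : ℝ, HasDerivAt F (lam - (1-t) * Real.exp x / (t + (1-t) * Real.exp x)) x := by
      intro x
      have h1 : HasDerivAt (fun x : ℝ => t + (1-t) * Real.exp x) ((1-t) * Real.exp x) x :=
        ((Real.hasDerivAt_exp x).const_mul (1-t)).const_add t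
      have h2 := h1.log (hGpos x).ne'
      have h3 := ((hasDerivAt_id x).const_mul lam).sub h2
      simp at h3; exact h3
    have hmono : MonotoneOn F (Set.Icc 0 C) := by
      apply monotoneOn_of_deriv_nonneg (convex_Icc 0 C)
      · exact Continuous.continuousOn (continuous_iff_continuousAt.2
          (fun x => ((hder x).differentiableAt).continuousAt))
      · intro x _
        exact ((hder x).differentiableAt).differentiableWithinAt
      · intro x hx
        rw [(hder x).deriv]
        rw [interior_Icc] at hx
        have hexp : Real.exp x ≤ Real.exp C := Real.exp_le_exp.2 hx.2.le
        rw [sub_nonneg, hlam]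
        rw [div_le_div_iff₀ (hGpos x) hden]
        have h4 := Real.exp_pos x
        nlinarith [mul_le_mul_of_nonneg_left hexp (mul_nonneg (sub_nonneg.2 ht1) ht0.le)]
    have h0 : F 0 = 0 := by
      simp [hF, Real.log_one]
    have := hmono (Set.mem_Icc.2 ⟨le_refl 0, hC.le⟩) (Set.mem_Icc.2 ⟨hD0, hDC⟩) hD0
    rw [h0] at this
    simp only [hF] at this
    linarith

-- positivity of interval integral of a continuous positive function
lemma intpos (g : ℝ → ℝ) (hg : Continuous g) (hp : ∀ x ∈ Icc (0:ℝ) 1, 0 < g x) :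
    0 < ∫ x in (0:ℝ)..1, g x :=
  intervalIntegral.intervalIntegral_pos_of_pos_on (hg.intervalIntegrable 0 1)
    (fun x hx => hp x ⟨hx.1.le, hx.2.le⟩) zero_lt_one

lemma intmono (g h : ℝ → ℝ) (hg : Continuous g) (hh : Continuous h)
    (hle : ∀ x ∈ Icc (0:ℝ) 1, g x ≤ h x) :
    (∫ x in (0:ℝ)..1, g x) ≤ ∫ x in (0:ℝ)..1, h x :=
  intervalIntegral.integral_mono_on zero_le_one (hg.intervalIntegrable 0 1)
    (hh.intervalIntegrable 0 1) hle

lemma core_ineq (θ : ℝ) (hθ : 1 ≤ θ) (k : ℝ → ℝ → ℝ)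
    (hkc : ∀ y, Continuous fun x => k x y)
    (hkpos : ∀ x y, 0 < k x y)
    (hkr : ∀ x y y', k x y ≤ θ * k x y')
    (u u' : ℝ → ℝ) (hu : Continuous u) (hu' : Continuous u')
    (m M : ℝ) (hm : ∀ x ∈ Set.Icc (0:ℝ) 1, m ≤ u x - u' x)
    (hM : ∀ x ∈ Set.Icc (0:ℝ) 1, u x - u' x ≤ M)
    (y y' : ℝ) :
    Real.log (∫ x in (0:ℝ)..1, k x y * Real.exp (u x)) -
      Real.log (∫ x in (0:ℝ)..1, k x y * Real.exp (u' x))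
    - (Real.log (∫ x in (0:ℝ)..1, k x y' * Real.exp (u x)) -
       Real.log (∫ x in (0:ℝ)..1, k x y' * Real.exp (u' x)))
    ≤ Real.log (θ⁻¹^2 + (1 - θ⁻¹^2) * Real.exp (M - m)) := by
  have hθ0 : 0 < θ := lt_of_lt_of_le one_pos hθ
  set t := θ⁻¹^2 with hts
  have ht0 : 0 < t := by positivity
  have ht1 : t ≤ 1 := by
    rw [hts]
    have : θ⁻¹ ≤ 1 := inv_le_one_of_one_le₀ hθ
    nlinarith [inv_pos.2 hθ0]
  set Ja := ∫ x in (0:ℝ)..1, k x y * Real.exp (u x) with hJa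
  set Ia := ∫ x in (0:ℝ)..1, k x y * Real.exp (u' x) with hIa
  set Jb := ∫ x in (0:ℝ)..1, k x y' * Real.exp (u x) with hJb
  set Ib := ∫ x in (0:ℝ)..1, k x y' * Real.exp (u' x) with hIb
  have hcont : ∀ (yy : ℝ) (v : ℝ → ℝ), Continuous v →
      Continuous fun x => k x yy * Real.exp (v x) := by
    intro yy v hv
    exact (hkc yy).mul (Real.continuous_exp.comp hv)
  have hIapos : 0 < Ia := intpos _ (hcont y u' hu') (fun x _ => mul_pos (hkpos x y) (Real.exp_pos _))
  have hJapos : 0 < Ja := intpos _ (hcont y u hu) (fun x _ => mul_pos (hkpos x y) (Real.exp_pos _))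
  have hIbpos : 0 < Ib := intpos _ (hcont y' u' hu') (fun x _ => mul_pos (hkpos x y') (Real.exp_pos _))
  have hJbpos : 0 < Jb := intpos _ (hcont y' u hu) (fun x _ => mul_pos (hkpos x y') (Real.exp_pos _))
  -- Ia ≤ θ * Ib
  have hIab : Ia ≤ θ * Ib := by
    rw [hIa, hIb, ← intervalIntegral.integral_const_mul]
    apply intmono _ _ (hcont y u' hu') (continuous_const.mul (hcont y' u' hu'))
    intro x _
    have := hkr x y y'
    show k x y * Real.exp (u' x) ≤ θ * (k x y' * Real.exp (u' x))
    nlinarith [Real.exp_pos (u' x), hkpos x y']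
  set s := t * Ia / Ib with hs
  have hs0 : 0 ≤ s := by positivity
  have hsθ : s ≤ θ⁻¹ := by
    rw [hs, div_le_iff₀ hIbpos]
    have h1 : t * Ia ≤ t * (θ * Ib) := by nlinarith
    calc t * Ia ≤ t * (θ * Ib) := h1
      _ = θ⁻¹ * Ib * (θ⁻¹ * θ) := by rw [hts]; ring
      _ = θ⁻¹ * Ib := by rw [inv_mul_cancel₀ hθ0.ne']; ring
  -- pointwise : k x y - s * k x y' ≥ 0
  have hknn : ∀ x, 0 ≤ k x y - s * k x y' := by
    intro x
    have h1 : θ⁻¹ * k x y' ≤ k x y := by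
      have := hkr x y' y
      rw [inv_mul_le_iff₀ hθ0]
      linarith
    nlinarith [hkpos x y', (hkpos x y').le]
  -- key : Ja ≤ s * Jb + exp M * (Ia - s * Ib)
  have hkey : Ja ≤ s * Jb + Real.exp M * (Ia - s * Ib) := by
    have hpt : ∀ x ∈ Icc (0:ℝ) 1,
        k x y * Real.exp (u x) ≤ s * (k x y' * Real.exp (u x))
          + Real.exp M * (k x y * Real.exp (u' x) - s * (k x y' * Real.exp (u' x))) := by
      intro x hx
      have h1 : Real.exp (u x) ≤ Real.exp M * Real.exp (u' x) := by
        rw [← Real.exp_add]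
        exact Real.exp_le_exp.2 (by linarith [hM x hx])
      have h2 := hknn x
      nlinarith [Real.exp_pos (u x), Real.exp_pos (u' x)]
    have := intmono _ _ (hcont y u hu)
      (((continuous_const.mul (hcont y' u hu))).add
        (continuous_const.mul ((hcont y u' hu').sub (continuous_const.mul (hcont y' u' hu')))))
      hpt
    rw [hJa]
    calc (∫ x in (0:ℝ)..1, k x y * Real.exp (u x)) ≤ _ := this
      _ = s * Jb + Real.exp M * (Ia - s * Ib) := by
        show (∫ x in (0:ℝ)..1, s * (k x y' * Real.exp (u x)) + Real.exp M * (k x y * Real.exp (u' x) - s * (k x y' * Real.exp (u' x)))) = _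
        rw [intervalIntegral.integral_add, intervalIntegral.integral_const_mul,
          intervalIntegral.integral_const_mul, intervalIntegral.integral_sub,
          intervalIntegral.integral_const_mul]
        · exact ((hcont y u' hu').intervalIntegrable 0 1)
        · exact ((continuous_const.mul (hcont y' u' hu')).intervalIntegrable 0 1)
        · exact ((continuous_const.mul (hcont y' u hu)).intervalIntegrable 0 1)
        · exact ((continuous_const.mul ((hcont y u' hu').sub
            (continuous_const.mul (hcont y' u' hu')))).intervalIntegrable 0 1)
    done
  -- Jb ≥ exp m * Ib
  have hJbm : Real.exp m * Ib ≤ Jb := by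
    rw [hJb, hIb, ← intervalIntegral.integral_const_mul]
    apply intmono _ _ (continuous_const.mul (hcont y' u' hu')) (hcont y' u hu)
    intro x hx
    have h1 : Real.exp m * Real.exp (u' x) ≤ Real.exp (u x) := by
      rw [← Real.exp_add]
      exact Real.exp_le_exp.2 (by linarith [hm x hx])
    show Real.exp m * (k x y' * Real.exp (u' x)) ≤ k x y' * Real.exp (u x)
    nlinarith [hkpos x y', (hkpos x y').le]
  -- final ratio inequality : Ja * Ib ≤ (t + (1-t) exp D) * Ia * Jb
  have hfin : Ja * Ib ≤ (t + (1-t) * Real.exp (M - m)) * (Ia * Jb) := by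
    have hsIb : s * Ib = t * Ia := by
      rw [hs]; field_simp
    have h1 : Ja * Ib ≤ s * Jb * Ib + Real.exp M * (Ia - s * Ib) * Ib := by
      have := mul_le_mul_of_nonneg_right hkey hIbpos.le
      calc Ja * Ib ≤ (s * Jb + Real.exp M * (Ia - s * Ib)) * Ib := this
        _ = s * Jb * Ib + Real.exp M * (Ia - s * Ib) * Ib := by ring
    have h2 : Real.exp M * (1 - t) * Ia * Ib ≤ Real.exp (M - m) * (1 - t) * Ia * Jb := by
      have h3 : Real.exp M * Ib = Real.exp (M - m) * (Real.exp m * Ib) := by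
        rw [← mul_assoc, ← Real.exp_add]; ring_nf
      have h4 : 0 ≤ (1 - t) * Ia := by nlinarith
      calc Real.exp M * (1 - t) * Ia * Ib = (1-t) * Ia * (Real.exp M * Ib) := by ring
        _ = (1-t) * Ia * (Real.exp (M-m) * (Real.exp m * Ib)) := by rw [h3]
        _ ≤ (1-t) * Ia * (Real.exp (M-m) * Jb) := by
            apply mul_le_mul_of_nonneg_left _ h4
            exact mul_le_mul_of_nonneg_left hJbm (Real.exp_pos _).le
        _ = Real.exp (M - m) * (1 - t) * Ia * Jb := by ring
    have h5 : s * Jb * Ib = t * Ia * Jb := by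
      have : s * Jb * Ib = (s * Ib) * Jb := by ring
      rw [this, hsIb]
    have h6 : Real.exp M * (Ia - s * Ib) * Ib = Real.exp M * (1-t) * Ia * Ib := by
      rw [hsIb]; ring
    have hgoal : Ja * Ib ≤ t * (Ia * Jb) + (1-t) * Real.exp (M-m) * (Ia * Jb) := by
      rw [h5, h6] at h1
      linarith [h1, h2]
    calc Ja * Ib ≤ t * (Ia * Jb) + (1-t) * Real.exp (M-m) * (Ia * Jb) := hgoal
      _ = (t + (1-t) * Real.exp (M - m)) * (Ia * Jb) := by ring
  -- take logs
  have hK : 0 < t + (1-t) * Real.exp (M - m) := by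
    have := Real.exp_pos (M - m); nlinarith
  have hlog := Real.log_le_log (mul_pos hJapos hIbpos) hfin
  rw [Real.log_mul hK.ne' (mul_pos hIapos hJbpos).ne', Real.log_mul hJapos.ne' hIbpos.ne',
    Real.log_mul hIapos.ne' hJbpos.ne'] at hlog
  linarith

noncomputable def Aint (f : ℝ → ℝ → ℝ) (u : ℝ → ℝ) (x : ℝ) : ℝ :=
  ∫ y in (0:ℝ)..1, f x y * Real.exp (u y)

noncomputable def vfun (f : ℝ → ℝ → ℝ) (c : ℝ → ℝ) (u : ℝ → ℝ) (x : ℝ) : ℝ :=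
  Real.log (c x) - Real.log (Aint f u x)

noncomputable def Pint (f : ℝ → ℝ → ℝ) (c : ℝ → ℝ) (u : ℝ → ℝ) (y : ℝ) : ℝ :=
  ∫ x in (0:ℝ)..1, f x y * Real.exp (vfun f c u x)

noncomputable def Ufun (f : ℝ → ℝ → ℝ) (r c : ℝ → ℝ) (u : ℝ → ℝ) (y : ℝ) : ℝ :=
  Real.log (r y) - Real.log (Pint f c u y)

noncomputable def Tfun (f : ℝ → ℝ → ℝ) (r c : ℝ → ℝ) (u : ℝ → ℝ) (y : ℝ) : ℝ :=
  Ufun f r c u y - Ufun f r c u 0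

section lemmas
variable {f : ℝ → ℝ → ℝ} {r c u : ℝ → ℝ} {b B : ℝ}

lemma fc1 (hf : Continuous fun p : ℝ × ℝ => f p.1 p.2) (x : ℝ) :
    Continuous fun y => f x y := hf.comp (continuous_const.prodMk continuous_id)

lemma fc2 (hf : Continuous fun p : ℝ × ℝ => f p.1 p.2) (y : ℝ) :
    Continuous fun x => f x y := hf.comp (continuous_id.prodMk continuous_const)

lemma Acont (hf : Continuous fun p : ℝ × ℝ => f p.1 p.2) (hu : Continuous u) :
    Continuous (Aint f u) := by
  apply continuous_parametric_intervalIntegral_of_continuous'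
    (μ := volume) (f := fun x y => f x y * Real.exp (u y))
  exact hf.mul ((Real.continuous_exp.comp hu).comp continuous_snd)

lemma Apos (hf : Continuous fun p : ℝ × ℝ => f p.1 p.2) (hu : Continuous u)
    (hb : 0 < b) (hfl : ∀ x y, b ≤ f x y) (x : ℝ) : 0 < Aint f u x := by
  apply intervalIntegral.intervalIntegral_pos_of_pos_on
    (((fc1 hf x).mul (Real.continuous_exp.comp hu)).intervalIntegrable 0 1)
    (fun y _ => mul_pos (lt_of_lt_of_le hb (hfl x y)) (Real.exp_pos _)) zero_lt_one

lemma vcont (hf : Continuous fun p : ℝ × ℝ => f p.1 p.2) (hu : Continuous u)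
    (hb : 0 < b) (hfl : ∀ x y, b ≤ f x y) (hc : Continuous c) (hcp : ∀ x, 0 < c x) :
    Continuous (vfun f c u) :=
  (hc.log (fun x => (hcp x).ne')).sub
    ((Acont hf hu).log (fun x => (Apos hf hu hb hfl x).ne'))

lemma Pcont (hf : Continuous fun p : ℝ × ℝ => f p.1 p.2) (hu : Continuous u)
    (hb : 0 < b) (hfl : ∀ x y, b ≤ f x y) (hc : Continuous c) (hcp : ∀ x, 0 < c x) :
    Continuous (Pint f c u) := by
  apply continuous_parametric_intervalIntegral_of_continuous'
    (μ := volume) (f := fun y x => f x y * Real.exp (vfun f c u x))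
  exact (hf.comp continuous_swap).mul
    ((Real.continuous_exp.comp (vcont hf hu hb hfl hc hcp)).comp continuous_snd)

lemma Ppos (hf : Continuous fun p : ℝ × ℝ => f p.1 p.2) (hu : Continuous u)
    (hb : 0 < b) (hfl : ∀ x y, b ≤ f x y) (hc : Continuous c) (hcp : ∀ x, 0 < c x)
    (y : ℝ) : 0 < Pint f c u y := by
  apply intervalIntegral.intervalIntegral_pos_of_pos_on
    (((fc2 hf y).mul (Real.continuous_exp.comp
      (vcont hf hu hb hfl hc hcp))).intervalIntegrable 0 1)
    (fun x _ => mul_pos (lt_of_lt_of_le hb (hfl x y)) (Real.exp_pos _)) zero_lt_one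

lemma Tcont (hf : Continuous fun p : ℝ × ℝ => f p.1 p.2) (hu : Continuous u)
    (hb : 0 < b) (hfl : ∀ x y, b ≤ f x y) (hc : Continuous c) (hcp : ∀ x, 0 < c x)
    (hr : Continuous r) (hrp : ∀ y, 0 < r y) :
    Continuous (Tfun f r c u) := by
  have hU : Continuous (Ufun f r c u) :=
    (hr.log (fun y => (hrp y).ne')).sub
      ((Pcont hf hu hb hfl hc hcp).log (fun y => (Ppos hf hu hb hfl hc hcp y).ne'))
  exact hU.sub continuous_const

lemma Pratio (hf : Continuous fun p : ℝ × ℝ => f p.1 p.2) (hu : Continuous u)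
    (hb : 0 < b) (hfl : ∀ x y, b ≤ f x y) (hfu : ∀ x y, f x y ≤ B)
    (hc : Continuous c) (hcp : ∀ x, 0 < c x) (y y' : ℝ) :
    Pint f c u y ≤ (B / b) * Pint f c u y' := by
  have hcv : Continuous fun x => f x y' * Real.exp (vfun f c u x) :=
    (fc2 hf y').mul (Real.continuous_exp.comp (vcont hf hu hb hfl hc hcp))
  simp only [Pint]
  rw [← intervalIntegral.integral_const_mul]
  apply intervalIntegral.integral_mono_on zero_le_one
    (((fc2 hf y).mul (Real.continuous_exp.comp
      (vcont hf hu hb hfl hc hcp))).intervalIntegrable 0 1)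
    ((continuous_const.mul hcv).intervalIntegrable 0 1)
  intro x _
  have h1 : f x y ≤ (B / b) * f x y' := by
    rw [div_mul_eq_mul_div, le_div_iff₀ hb]
    nlinarith [hfu x y, hfl x y', hfl x y, hfu x y']
  have h2 := mul_le_mul_of_nonneg_right h1 (Real.exp_pos (vfun f c u x)).le
  simpa [Function.comp, mul_assoc] using h2

-- bound on the image of T
lemma Tbound (hf : Continuous fun p : ℝ × ℝ => f p.1 p.2) (hu : Continuous u)
    (hb : 0 < b) (hfl : ∀ x y, b ≤ f x y) (hfu : ∀ x y, f x y ≤ B)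
    (hc : Continuous c) (hcp : ∀ x, 0 < c x) (hrp : ∀ y, 0 < r y)
    {mr Mr : ℝ} (hmr : 0 < mr) (hrlo : ∀ y ∈ Icc (0:ℝ) 1, mr ≤ r y)
    (hrhi : ∀ y ∈ Icc (0:ℝ) 1, r y ≤ Mr) {z : ℝ} (hz : z ∈ Icc (0:ℝ) 1) :
    |Tfun f r c u z| ≤ (Real.log Mr - Real.log mr) + Real.log (B / b) := by
  have h0 : (0:ℝ) ∈ Icc (0:ℝ) 1 := ⟨le_refl 0, zero_le_one⟩
  have hθ : (1:ℝ) ≤ B / b := by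
    rw [le_div_iff₀ hb]; nlinarith [hfl 0 0, hfu 0 0]
  have hlogr : ∀ w ∈ Icc (0:ℝ) 1, Real.log mr ≤ Real.log (r w) ∧ Real.log (r w) ≤ Real.log Mr :=
    fun w hw => ⟨Real.log_le_log hmr (hrlo w hw), Real.log_le_log (hrp w) (hrhi w hw)⟩
  have hP : ∀ w w' : ℝ, Real.log (Pint f c u w) - Real.log (Pint f c u w') ≤ Real.log (B / b) := by
    intro w w'
    have h1 := Pratio hf hu hb hfl hfu hc hcp w w'
    have h2 := Real.log_le_log (Ppos hf hu hb hfl hc hcp w) h1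
    rw [Real.log_mul (by positivity : (B/b : ℝ) ≠ 0) (Ppos hf hu hb hfl hc hcp w').ne'] at h2
    linarith
  have e1 := (hlogr z hz).1; have e2 := (hlogr z hz).2
  have e3 := (hlogr 0 h0).1; have e4 := (hlogr 0 h0).2
  have e5 := hP z 0; have e6 := hP 0 z
  rw [abs_le]
  constructor <;> (simp only [Tfun, Ufun]; linarith)

end lemmas
-- attained min and max of a continuous function on [0,1]
lemma minmax (w : ℝ → ℝ) (hw : Continuous w) :
    ∃ zm ∈ Icc (0:ℝ) 1, ∃ zM ∈ Icc (0:ℝ) 1,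
      (∀ x ∈ Icc (0:ℝ) 1, w zm ≤ w x) ∧ (∀ x ∈ Icc (0:ℝ) 1, w x ≤ w zM) := by
  obtain ⟨zm, hzm, h1⟩ := isCompact_Icc.exists_isMinOn (nonempty_Icc.2 zero_le_one)
    hw.continuousOn
  obtain ⟨zM, hzM, h2⟩ := isCompact_Icc.exists_isMaxOn (nonempty_Icc.2 zero_le_one)
    hw.continuousOn
  exact ⟨zm, hzm, zM, hzM, fun x hx => h1 hx, fun x hx => h2 hx⟩

-- the two-layer contraction chain
lemma chain {f : ℝ → ℝ → ℝ} {r c : ℝ → ℝ} {b B : ℝ}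
    (hf : Continuous fun p : ℝ × ℝ => f p.1 p.2)
    (hb : 0 < b) (hfl : ∀ x y, b ≤ f x y) (hfu : ∀ x y, f x y ≤ B)
    (hc : Continuous c) (hcp : ∀ x, 0 < c x)
    (u u' : ℝ → ℝ) (hu : Continuous u) (hu' : Continuous u')
    (m M : ℝ) (hm : ∀ x ∈ Icc (0:ℝ) 1, m ≤ u x - u' x)
    (hM : ∀ x ∈ Icc (0:ℝ) 1, u x - u' x ≤ M)
    (lam Cc : ℝ) (hlam0 : 0 ≤ lam) (hlam1 : lam ≤ 1)
    (hg : ∀ D, 0 ≤ D → D ≤ Cc →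
      Real.log ((B/b)⁻¹^2 + (1 - (B/b)⁻¹^2) * Real.exp D) ≤ lam * D)
    (hmM : m ≤ M) (hDC : M - m ≤ Cc) (z z' : ℝ) :
    (Tfun f r c u z - Tfun f r c u' z) - (Tfun f r c u z' - Tfun f r c u' z')
      ≤ lam * (M - m) := by
  set θ := B / b with hθdef
  have hθ : (1:ℝ) ≤ θ := by
    rw [hθdef, le_div_iff₀ hb]; nlinarith [hfl 0 0, hfu 0 0]
  have hθ0 : (0:ℝ) < θ := lt_of_lt_of_le one_pos hθ
  have hBb : B = θ * b := by rw [hθdef]; field_simp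
  -- layer 1 : oscillation of log Aint u - log Aint u'
  have layer1 : ∀ x x' : ℝ,
      (Real.log (Aint f u x) - Real.log (Aint f u' x))
      - (Real.log (Aint f u x') - Real.log (Aint f u' x')) ≤
        Real.log (θ⁻¹^2 + (1 - θ⁻¹^2) * Real.exp (M - m)) := by
    intro x x'
    have := core_ineq θ hθ (fun a p => f p a)
      (fun p => fc1 hf p) (fun a p => lt_of_lt_of_le hb (hfl p a))
      (fun a p p' => by
        calc f p a ≤ B := hfu p a
          _ = θ * b := hBb
          _ ≤ θ * f p' a := by nlinarith [hfl p' a])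
      u u' hu hu' m M hm hM x x'
    simpa [Aint] using this
  -- min / max of second-layer difference
  have hvc : Continuous fun x => vfun f c u x - vfun f c u' x :=
    (vcont hf hu hb hfl hc hcp).sub (vcont hf hu' hb hfl hc hcp)
  obtain ⟨xm, hxm, xM, hxM, hmin, hmax⟩ := minmax _ hvc
  set m₂ := vfun f c u xm - vfun f c u' xm with hm₂
  set M₂ := vfun f c u xM - vfun f c u' xM with hM₂
  have hm₂M₂ : m₂ ≤ M₂ := hmin xM hxM
  have hvdiff : ∀ x, vfun f c u x - vfun f c u' x
      = Real.log (Aint f u' x) - Real.log (Aint f u x) := by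
    intro x; simp only [vfun]; ring
  have hosc2 : M₂ - m₂ ≤ Real.log (θ⁻¹^2 + (1 - θ⁻¹^2) * Real.exp (M - m)) := by
    have h1 := layer1 xm xM
    rw [hM₂, hm₂, hvdiff xM, hvdiff xm]
    linarith
  have hD0 : 0 ≤ M - m := by linarith
  have hgD := hg (M - m) hD0 hDC
  have hosc2' : M₂ - m₂ ≤ lam * (M - m) := le_trans hosc2 hgD
  have hM₂0 : 0 ≤ M₂ - m₂ := by linarith
  have hM₂C : M₂ - m₂ ≤ Cc := by nlinarith
  -- layer 2
  have layer2 : ∀ w w' : ℝ,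
      (Real.log (Pint f c u w) - Real.log (Pint f c u' w))
      - (Real.log (Pint f c u w') - Real.log (Pint f c u' w')) ≤
        Real.log (θ⁻¹^2 + (1 - θ⁻¹^2) * Real.exp (M₂ - m₂)) := by
    intro w w'
    have := core_ineq θ hθ f
      (fun y => fc2 hf y) (fun x y => lt_of_lt_of_le hb (hfl x y))
      (fun x y y' => by
        calc f x y ≤ B := hfu x y
          _ = θ * b := hBb
          _ ≤ θ * f x y' := by nlinarith [hfl x y'])
      (vfun f c u) (vfun f c u') (vcont hf hu hb hfl hc hcp) (vcont hf hu' hb hfl hc hcp)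
      m₂ M₂ (fun x hx => hmin x hx) (fun x hx => hmax x hx) w w'
    simpa [Pint] using this
  have hfin : (Real.log (Pint f c u z') - Real.log (Pint f c u' z'))
      - (Real.log (Pint f c u z) - Real.log (Pint f c u' z)) ≤ lam * (M - m) := by
    have h2 := layer2 z' z
    have h3 := hg (M₂ - m₂) hM₂0 hM₂C
    nlinarith
  simp only [Tfun, Ufun]
  linarith

lemma abstract_fixed_point {E : Type*} [MetricSpace E] [CompleteSpace E] [Nonempty E]
    (T : E → E) (lam : ℝ) (hlam0 : 0 ≤ lam) (hlam1 : lam < 1)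
    (Osc : E → E → ℝ) (hOsc1 : ∀ u v, dist u v ≤ Osc u v)
    (hOsc2 : ∀ u v, Osc u v ≤ 2 * dist u v)
    (hT : ∀ u v, Osc (T u) (T v) ≤ lam * Osc u v) :
    ∃ x, T x = x ∧ ∀ y, T y = y → y = x := by
  have hOsc0 : ∀ u v, 0 ≤ Osc u v := fun u v => le_trans dist_nonneg (hOsc1 u v)
  have hiter : ∀ n u v, Osc (T^[n] u) (T^[n] v) ≤ lam ^ n * Osc u v := by
    intro n
    induction n with
    | zero => intro u v; simp
    | succ n ih =>
      intro u v
      rw [Function.iterate_succ_apply', Function.iterate_succ_apply']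
      calc Osc (T (T^[n] u)) (T (T^[n] v)) ≤ lam * Osc (T^[n] u) (T^[n] v) := hT _ _
        _ ≤ lam * (lam ^ n * Osc u v) := by
            exact mul_le_mul_of_nonneg_left (ih u v) hlam0
        _ = lam ^ (n+1) * Osc u v := by ring
  obtain ⟨n, hn⟩ := exists_pow_lt_of_lt_one (by norm_num : (0:ℝ) < 1/2) hlam1
  set K : NNReal := ⟨2 * lam ^ n, by positivity⟩ with hK
  have hK1 : K < 1 := by
    rw [← NNReal.coe_lt_coe, hK]
    show 2 * lam ^ n < (1:ℝ); linarith
  have hlip : LipschitzWith K (T^[n]) := by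
    apply LipschitzWith.of_dist_le_mul
    intro u v
    calc dist (T^[n] u) (T^[n] v) ≤ Osc (T^[n] u) (T^[n] v) := hOsc1 _ _
      _ ≤ lam ^ n * Osc u v := hiter n u v
      _ ≤ lam ^ n * (2 * dist u v) := mul_le_mul_of_nonneg_left (hOsc2 u v) (by positivity)
      _ = (K : ℝ) * dist u v := by rw [hK]; show lam ^ n * (2 * dist u v) = 2 * lam ^ n * dist u v; ring
  have hC : ContractingWith K (T^[n]) := ⟨hK1, hlip⟩
  refine ⟨hC.fixedPoint (T^[n]), hC.isFixedPt_fixedPoint_iterate, ?_⟩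
  intro y hy
  have hyn : T^[n] y = y := Function.IsFixedPt.iterate hy n
  exact hC.fixedPoint_unique hyn

noncomputable def OscW (w : C(Icc (0:ℝ) 1, ℝ)) : ℝ :=
  sSup (Set.range w) - sInf (Set.range w)

lemma OscW_spec (w : C(Icc (0:ℝ) 1, ℝ)) :
    ∃ zm zM : Icc (0:ℝ) 1, (∀ z, w zm ≤ w z) ∧ (∀ z, w z ≤ w zM) ∧
      OscW w = w zM - w zm := by
  haveI : Nonempty (Icc (0:ℝ) 1) := ⟨⟨0, by norm_num⟩⟩
  have hcomp : IsCompact (Set.range w) := isCompact_range w.continuous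
  have hne : (Set.range w).Nonempty := Set.range_nonempty _
  obtain ⟨zM, hzM⟩ := hcomp.sSup_mem hne
  obtain ⟨zm, hzm⟩ := hcomp.sInf_mem hne
  refine ⟨zm, zM, fun z => ?_, fun z => ?_, by rw [OscW, hzM, hzm]⟩
  · rw [hzm]; exact csInf_le hcomp.bddBelow (Set.mem_range_self z)
  · rw [hzM]; exact le_csSup hcomp.bddAbove (Set.mem_range_self z)

lemma OscW_le (w : C(Icc (0:ℝ) 1, ℝ)) (K : ℝ) (h : ∀ z, |w z| ≤ K) :
    OscW w ≤ 2 * K := by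
  obtain ⟨zm, zM, _, _, heq⟩ := OscW_spec w
  rw [heq]
  have h1 := abs_le.1 (h zM)
  have h2 := abs_le.1 (h zm)
  linarith

lemma norm_le_OscW (w : C(Icc (0:ℝ) 1, ℝ)) (h : w ⟨0, by norm_num⟩ = 0) :
    ‖w‖ ≤ OscW w := by
  obtain ⟨zm, zM, h1, h2, heq⟩ := OscW_spec w
  have hnn : 0 ≤ OscW w := by rw [heq]; linarith [h1 zM]
  rw [ContinuousMap.norm_le _ hnn]
  intro z
  rw [Real.norm_eq_abs, abs_le, heq]
  constructor
  · have := h2 ⟨0, by norm_num⟩; have := h1 z; rw [h] at *; linarith [h2 z, h1 ⟨0, by norm_num⟩]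
  · have ha := h1 (⟨0, by norm_num⟩ : Icc (0:ℝ) 1)
    rw [h] at ha
    linarith [h2 z]

-- Fubini on the unit square for continuous integrands
lemma fubini01 (g : ℝ → ℝ → ℝ) (hg : Continuous fun p : ℝ × ℝ => g p.1 p.2) :
    (∫ x in (0:ℝ)..1, ∫ y in (0:ℝ)..1, g x y) = ∫ y in (0:ℝ)..1, ∫ x in (0:ℝ)..1, g x y := by
  have h01 : (0:ℝ) ≤ 1 := zero_le_one
  rw [intervalIntegral.integral_of_le h01, intervalIntegral.integral_of_le h01]
  simp_rw [intervalIntegral.integral_of_le h01]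
  apply MeasureTheory.integral_integral_swap
  have : IntegrableOn (fun p : ℝ × ℝ => g p.1 p.2) (Ioc (0:ℝ) 1 ×ˢ Ioc (0:ℝ) 1)
      (volume.prod volume) := by
    apply (hg.continuousOn.integrableOn_compact (isCompact_Icc.prod isCompact_Icc)).mono_set
    exact Set.prod_mono Ioc_subset_Icc_self Ioc_subset_Icc_self
  rwa [IntegrableOn, ← Measure.prod_restrict] at this

theorem sinkhorn_aux (f : ℝ → ℝ → ℝ) (hf : Continuous fun p : ℝ × ℝ => f p.1 p.2)
    (b B : ℝ) (hb : 0 < b) (hfl : ∀ x y, b ≤ f x y) (hfu : ∀ x y, f x y ≤ B)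
    (r c : ℝ → ℝ) (hr : Continuous r) (hc : Continuous c)
    (hrp : ∀ y, 0 < r y) (hcp : ∀ x, 0 < c x)
    (hmass : (∫ y in (0:ℝ)..1, r y) = ∫ x in (0:ℝ)..1, c x) :
    ∃ h₁ h₂ : ℝ → ℝ, Continuous h₁ ∧ Continuous h₂ ∧ (∀ x, 0 < h₁ x) ∧ (∀ y, 0 < h₂ y) ∧
      (∀ y ∈ Icc (0:ℝ) 1, ∫ x in (0:ℝ)..1, h₁ x * f x y * h₂ y = r y) ∧
      (∀ x, ∫ y in (0:ℝ)..1, h₁ x * f x y * h₂ y = c x) ∧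
      (∀ h₁' h₂' : ℝ → ℝ, ContinuousOn h₁' (Icc 0 1) → ContinuousOn h₂' (Icc 0 1) →
        (∀ x ∈ Icc (0:ℝ) 1, 0 < h₁' x) → (∀ y ∈ Icc (0:ℝ) 1, 0 < h₂' y) →
        (∀ y ∈ Icc (0:ℝ) 1, ∫ x in (0:ℝ)..1, h₁' x * f x y * h₂' y = r y) →
        (∀ x ∈ Icc (0:ℝ) 1, ∫ y in (0:ℝ)..1, h₁' x * f x y * h₂' y = c x) →
        ∃ α : ℝ, 0 < α ∧ (∀ x ∈ Icc (0:ℝ) 1, h₁' x = α * h₁ x) ∧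
          (∀ y ∈ Icc (0:ℝ) 1, α * h₂' y = h₂ y)) := by
  have h01 : (0:ℝ) ≤ 1 := zero_le_one
  have h0m : (0:ℝ) ∈ Icc (0:ℝ) 1 := ⟨le_refl 0, h01⟩
  set θ := B / b with hθdef
  have hθ : (1:ℝ) ≤ θ := by rw [hθdef, le_div_iff₀ hb]; nlinarith [hfl 0 0, hfu 0 0]
  have hθ0 : (0:ℝ) < θ := lt_of_lt_of_le one_pos hθ
  set t := θ⁻¹ ^ 2 with htdef
  have ht0 : 0 < t := by positivity
  have ht1 : t ≤ 1 := by
    have h1 : θ⁻¹ ≤ 1 := inv_le_one_of_one_le₀ hθ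
    have h2 : 0 < θ⁻¹ := inv_pos.2 hθ0
    rw [htdef]; nlinarith
  obtain ⟨zr, hzr, zR, hzR, hrmin, hrmax⟩ := minmax r hr
  set mr := r zr with hmrdef
  set Mr := r zR with hMrdef
  have hmr0 : 0 < mr := hrp zr
  have hmrMr : mr ≤ Mr := hrmin zR hzR
  set R := (Real.log Mr - Real.log mr) + Real.log θ with hRdef
  have hR0 : 0 ≤ R := by
    have h1 : Real.log mr ≤ Real.log Mr := Real.log_le_log hmr0 hmrMr
    have h2 : 0 ≤ Real.log θ := Real.log_nonneg hθ
    linarith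
  set Cc := 4 * R + 1 with hCcdef
  have hCc0 : (0:ℝ) < Cc := by rw [hCcdef]; linarith
  obtain ⟨lam, hlam0, hlam1, hg⟩ := lam_lemma t Cc ht0 ht1 hCc0
  set pt0 : Icc (0:ℝ) 1 := ⟨0, h0m⟩ with hpt0
  set X : Set C(Icc (0:ℝ) 1, ℝ) := {u | u pt0 = 0} ∩ {u | ‖u‖ ≤ R} with hX
  have hXclosed : IsClosed X :=
    (isClosed_eq (continuous_eval_const pt0) continuous_const).inter
      (isClosed_le continuous_norm continuous_const)
  haveI : CompleteSpace ↥X := hXclosed.completeSpace_coe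
  haveI : Nonempty ↥X := ⟨⟨0, by simp, by simp [hR0]⟩⟩
  have hTcont : ∀ w : C(Icc (0:ℝ) 1, ℝ),
      Continuous fun z : Icc (0:ℝ) 1 => Tfun f r c (IccExtend h01 w) z :=
    fun w => (Tcont hf w.continuous.Icc_extend' hb hfl hc hcp hr hrp).comp
      continuous_subtype_val
  set Tc : C(Icc (0:ℝ) 1, ℝ) → C(Icc (0:ℝ) 1, ℝ) :=
    fun w => ⟨fun z => Tfun f r c (IccExtend h01 w) z, hTcont w⟩ with hTc
  have hTmem : ∀ w : C(Icc (0:ℝ) 1, ℝ), Tc w ∈ X := by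
    intro w
    constructor
    · show Tfun f r c (IccExtend h01 w) (pt0 : ℝ) = 0
      simp [Tfun, hpt0]
    · show ‖Tc w‖ ≤ R
      rw [ContinuousMap.norm_le _ hR0]
      intro z
      rw [Real.norm_eq_abs]
      show |Tfun f r c (IccExtend h01 w) z| ≤ R
      exact Tbound hf w.continuous.Icc_extend' hb hfl hfu hc hcp hrp hmr0
        (fun y hy => hrmin y hy) (fun y hy => hrmax y hy) z.2
  set Tm : ↥X → ↥X := fun u => ⟨Tc u, hTmem u⟩ with hTm
  set Osc : ↥X → ↥X → ℝ := fun u v => OscW ((u : C(Icc (0:ℝ) 1, ℝ)) - v) with hOscdef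
  have hsub0 : ∀ u v : ↥X, ((u : C(Icc (0:ℝ) 1, ℝ)) - (v : C(Icc (0:ℝ) 1, ℝ))) pt0 = 0 := by
    intro u v
    have h1 := u.2.1; have h2 := v.2.1
    simp only [ContinuousMap.sub_apply]
    simp only [hX, Set.mem_setOf_eq] at h1 h2
    rw [h1, h2]; ring
  have hdisteq : ∀ u v : ↥X, dist u v = ‖(u : C(Icc (0:ℝ) 1, ℝ)) - v‖ := by
    intro u v
    rw [Subtype.dist_eq, dist_eq_norm]
  have hOsc1 : ∀ u v : ↥X, dist u v ≤ Osc u v := by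
    intro u v
    rw [hdisteq]
    exact norm_le_OscW _ (hsub0 u v)
  have hOsc2 : ∀ u v : ↥X, Osc u v ≤ 2 * dist u v := by
    intro u v
    rw [hdisteq]
    refine OscW_le _ _ (fun z => ?_)
    rw [← Real.norm_eq_abs]
    exact ContinuousMap.norm_coe_le_norm _ z
  have hT : ∀ u v : ↥X, Osc (Tm u) (Tm v) ≤ lam * Osc u v := by
    intro u v
    obtain ⟨zm, zM, hmin, hmax, heq⟩ := OscW_spec ((u : C(Icc (0:ℝ) 1, ℝ)) - v)
    set w := (u : C(Icc (0:ℝ) 1, ℝ)) - (v : C(Icc (0:ℝ) 1, ℝ)) with hw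
    set m := w zm with hmdef
    set M := w zM with hMdef
    have hOuv : Osc u v = M - m := heq
    have hext : ∀ x : ℝ, ∀ hx : x ∈ Icc (0:ℝ) 1,
        IccExtend h01 (u : C(Icc (0:ℝ) 1, ℝ)) x - IccExtend h01 (v : C(Icc (0:ℝ) 1, ℝ)) x
          = w ⟨x, hx⟩ := by
      intro x hx
      rw [IccExtend_of_mem h01 _ hx, IccExtend_of_mem h01 _ hx]
      simp [hw]
    have hm' : ∀ x ∈ Icc (0:ℝ) 1, m ≤ IccExtend h01 (u : C(Icc (0:ℝ) 1, ℝ)) x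
        - IccExtend h01 (v : C(Icc (0:ℝ) 1, ℝ)) x := by
      intro x hx; rw [hext x hx]; exact hmin _
    have hM' : ∀ x ∈ Icc (0:ℝ) 1, IccExtend h01 (u : C(Icc (0:ℝ) 1, ℝ)) x
        - IccExtend h01 (v : C(Icc (0:ℝ) 1, ℝ)) x ≤ M := by
      intro x hx; rw [hext x hx]; exact hmax _
    have hmM : m ≤ M := hmin zM
    have hnu : ‖(u : C(Icc (0:ℝ) 1, ℝ))‖ ≤ R := u.2.2
    have hnv : ‖(v : C(Icc (0:ℝ) 1, ℝ))‖ ≤ R := v.2.2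
    have hDC : M - m ≤ Cc := by
      have h1 : ‖w‖ ≤ 2 * R := by
        rw [hw]
        calc ‖(u : C(Icc (0:ℝ) 1, ℝ)) - v‖ ≤ _ := norm_sub_le _ _
          _ ≤ 2 * R := by linarith
      have h2 : M ≤ ‖w‖ := by
        rw [hMdef]
        calc w zM ≤ |w zM| := le_abs_self _
          _ = ‖w zM‖ := (Real.norm_eq_abs _).symm
          _ ≤ ‖w‖ := ContinuousMap.norm_coe_le_norm _ _
      have h3 : -m ≤ ‖w‖ := by
        rw [hmdef]
        calc -(w zm) ≤ |w zm| := neg_le_abs _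
          _ = ‖w zm‖ := (Real.norm_eq_abs _).symm
          _ ≤ ‖w‖ := ContinuousMap.norm_coe_le_norm _ _
      rw [hCcdef]; linarith
    obtain ⟨zm', zM', hmin', hmax', heq'⟩ :=
      OscW_spec (((Tm u : ↥X) : C(Icc (0:ℝ) 1, ℝ)) - ((Tm v : ↥X) : C(Icc (0:ℝ) 1, ℝ)))
    have hchain := chain hf hb hfl hfu hc hcp
      (IccExtend h01 (u : C(Icc (0:ℝ) 1, ℝ))) (IccExtend h01 (v : C(Icc (0:ℝ) 1, ℝ)))
      ((u : C(Icc (0:ℝ) 1, ℝ)).continuous.Icc_extend')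
      ((v : C(Icc (0:ℝ) 1, ℝ)).continuous.Icc_extend')
      m M hm' hM' lam Cc hlam0 hlam1.le (r := r)
      (fun D hD1 hD2 => hg D hD1 hD2) hmM hDC zM' zm'
    show OscW _ ≤ lam * Osc u v
    rw [heq', hOuv]
    have happ : ∀ z : Icc (0:ℝ) 1,
        (((Tm u : ↥X) : C(Icc (0:ℝ) 1, ℝ)) - ((Tm v : ↥X) : C(Icc (0:ℝ) 1, ℝ))) z
        = Tfun f r c (IccExtend h01 (u : C(Icc (0:ℝ) 1, ℝ))) z
          - Tfun f r c (IccExtend h01 (v : C(Icc (0:ℝ) 1, ℝ))) z := by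
      intro z; rfl
    rw [happ zM', happ zm']
    linarith
  obtain ⟨x, hxfix, hxuniq⟩ := abstract_fixed_point Tm lam hlam0 hlam1 Osc hOsc1 hOsc2 hT
  set Ux := IccExtend h01 ((x : ↥X) : C(Icc (0:ℝ) 1, ℝ)) with hUx
  have hUc : Continuous Ux := ((x : ↥X) : C(Icc (0:ℝ) 1, ℝ)).continuous.Icc_extend'
  have hfixI : ∀ z : ℝ, z ∈ Icc (0:ℝ) 1 → Tfun f r c Ux z = Ux z := by
    intro z hz
    have h1 : Tc ((x : ↥X) : C(Icc (0:ℝ) 1, ℝ)) = ((x : ↥X) : C(Icc (0:ℝ) 1, ℝ)) :=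
      congrArg Subtype.val hxfix
    have h2 := congrFun (congrArg DFunLike.coe h1) ⟨z, hz⟩
    have h3 : Ux z = ((x : ↥X) : C(Icc (0:ℝ) 1, ℝ)) ⟨z, hz⟩ := IccExtend_of_mem h01 _ hz
    rw [h3]
    exact h2
  set β := Ufun f r c Ux 0 with hβ
  set h₂ : ℝ → ℝ := fun y => Real.exp (Ux y) with hh₂
  set h₁ : ℝ → ℝ := fun x' => Real.exp (vfun f c Ux x') with hh₁
  have hh₁c : Continuous h₁ := Real.continuous_exp.comp (vcont hf hUc hb hfl hc hcp)
  have hh₂c : Continuous h₂ := Real.continuous_exp.comp hUc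
  have hh₁p : ∀ x', 0 < h₁ x' := fun x' => Real.exp_pos _
  have hh₂p : ∀ y, 0 < h₂ y := fun y => Real.exp_pos _
  -- column marginal
  have hcol : ∀ x', (∫ y in (0:ℝ)..1, h₁ x' * f x' y * h₂ y) = c x' := by
    intro x'
    have h1 : (fun y => h₁ x' * f x' y * h₂ y)
        = fun y => h₁ x' * (f x' y * Real.exp (Ux y)) := by
      funext y; rw [hh₂]; ring
    rw [h1, intervalIntegral.integral_const_mul]
    show h₁ x' * Aint f Ux x' = c x'
    rw [hh₁]
    have hA := Apos hf hUc hb hfl x'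
    simp only [vfun]
    rw [Real.exp_sub, Real.exp_log (hcp x'), Real.exp_log hA]
    field_simp
  -- row marginal, preliminary
  have hPh : ∀ y, (∫ x' in (0:ℝ)..1, h₁ x' * f x' y * h₂ y) = Pint f c Ux y * h₂ y := by
    intro y
    have h1 : (fun x' => h₁ x' * f x' y * h₂ y)
        = fun x' => (f x' y * Real.exp (vfun f c Ux x')) * h₂ y := by
      funext x'; rw [hh₁]; ring
    rw [h1, intervalIntegral.integral_mul_const]
    rfl
  have hrowpre : ∀ y ∈ Icc (0:ℝ) 1,
      (∫ x' in (0:ℝ)..1, h₁ x' * f x' y * h₂ y) = Real.exp (-β) * r y := by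
    intro y hy
    rw [hPh y]
    have h1 := hfixI y hy
    have hP := Ppos hf hUc hb hfl hc hcp (c := c) y
    have h2 : Real.log (r y) - Real.log (Pint f c Ux y) - β = Ux y := by
      have := h1
      simp only [Tfun, Ufun, hβ] at this ⊢
      linarith
    have h3 : Pint f c Ux y * h₂ y = Real.exp (Real.log (Pint f c Ux y) + Ux y) := by
      rw [Real.exp_add, Real.exp_log hP, hh₂]
    rw [h3, ← h2]
    have h4 : Real.log (Pint f c Ux y) + (Real.log (r y) - Real.log (Pint f c Ux y) - β)
        = -β + Real.log (r y) := by ring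
    rw [h4, Real.exp_add, Real.exp_log (hrp y)]
  -- total mass forces β = 0
  have hβ0 : β = 0 := by
    have hgc : Continuous fun p : ℝ × ℝ => h₁ p.1 * f p.1 p.2 * h₂ p.2 := by
      exact ((hh₁c.comp continuous_fst).mul hf).mul (hh₂c.comp continuous_snd)
    have hfub := fubini01 (fun x' y => h₁ x' * f x' y * h₂ y) hgc
    have hL : (∫ x' in (0:ℝ)..1, ∫ y in (0:ℝ)..1, h₁ x' * f x' y * h₂ y)
        = ∫ x' in (0:ℝ)..1, c x' := by
      apply intervalIntegral.integral_congr
      intro x' _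
      exact hcol x'
    have hR : (∫ y in (0:ℝ)..1, ∫ x' in (0:ℝ)..1, h₁ x' * f x' y * h₂ y)
        = Real.exp (-β) * ∫ y in (0:ℝ)..1, r y := by
      rw [← intervalIntegral.integral_const_mul]
      apply intervalIntegral.integral_congr
      intro y hy
      rw [Set.uIcc_of_le h01] at hy
      exact hrowpre y hy
    have hrpos : 0 < ∫ y in (0:ℝ)..1, r y := intpos r hr (fun y _ => hrp y)
    have : Real.exp (-β) = 1 := by
      have h5 : (∫ y in (0:ℝ)..1, r y) = Real.exp (-β) * ∫ y in (0:ℝ)..1, r y := by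
        rw [← hR, ← hfub, hL, ← hmass]
      nlinarith
    have h6 : -β = 0 := Real.exp_injective (by rw [this, Real.exp_zero])
    linarith
  have hrow : ∀ y ∈ Icc (0:ℝ) 1, (∫ x' in (0:ℝ)..1, h₁ x' * f x' y * h₂ y) = r y := by
    intro y hy
    rw [hrowpre y hy, hβ0]
    simp
  refine ⟨h₁, h₂, hh₁c, hh₂c, hh₁p, hh₂p, hrow, hcol, ?_⟩
  intro h₁' h₂' hc1' hc2' hp1' hp2' hrow' hcol'
  have h20 : 0 < h₂' 0 := hp2' 0 h0m
  set a := Real.log (h₂' 0) with hadef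
  have hu'c : Continuous fun z : Icc (0:ℝ) 1 => Real.log (h₂' z) - a := by
    apply Continuous.sub _ continuous_const
    apply Continuous.log
    · exact hc2'.restrict
    · exact fun z => (hp2' z z.2).ne'
  set u' : C(Icc (0:ℝ) 1, ℝ) := ⟨fun z => Real.log (h₂' z) - a, hu'c⟩ with hu'
  set W := IccExtend h01 u' with hWdef
  have hWc : Continuous W := u'.continuous.Icc_extend'
  have hWval : ∀ z ∈ Icc (0:ℝ) 1, W z = Real.log (h₂' z) - a := by
    intro z hz
    rw [hWdef, IccExtend_of_mem h01 _ hz]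
    rfl
  have hexpW : ∀ z ∈ Icc (0:ℝ) 1, Real.exp (W z) = h₂' z * (h₂' 0)⁻¹ := by
    intro z hz
    rw [hWval z hz, Real.exp_sub, Real.exp_log (hp2' z hz), hadef, Real.exp_log h20,
      div_eq_mul_inv]
  -- compute Aint of W
  have hAW : ∀ x' ∈ Icc (0:ℝ) 1, Aint f W x' = (h₂' 0)⁻¹ * ((h₁' x')⁻¹ * c x') := by
    intro x' hx'
    have h1p : 0 < h₁' x' := hp1' x' hx'
    have h1 : Aint f W x'
        = ∫ y in (0:ℝ)..1, (h₂' 0)⁻¹ * ((h₁' x')⁻¹ * (h₁' x' * f x' y * h₂' y)) := by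
      apply intervalIntegral.integral_congr
      intro y hy
      rw [Set.uIcc_of_le h01] at hy
      show f x' y * Real.exp (W y) = (h₂' 0)⁻¹ * ((h₁' x')⁻¹ * (h₁' x' * f x' y * h₂' y))
      rw [hexpW y hy, mul_assoc (h₁' x') (f x' y) (h₂' y), inv_mul_cancel_left₀ h1p.ne']
      ring
    rw [h1, intervalIntegral.integral_const_mul, intervalIntegral.integral_const_mul,
      hcol' x' hx']
  have hvW : ∀ x' ∈ Icc (0:ℝ) 1, Real.exp (vfun f c W x') = h₂' 0 * h₁' x' := by
    intro x' hx'
    have h1p : 0 < h₁' x' := hp1' x' hx'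
    have hA := Apos hf hWc hb hfl (u := W) x'
    simp only [vfun]
    rw [Real.exp_sub, Real.exp_log (hcp x'), Real.exp_log hA, hAW x' hx']
    field_simp
    exact div_self (hcp x').ne'
  have hPW : ∀ y ∈ Icc (0:ℝ) 1, Pint f c W y = h₂' 0 * ((h₂' y)⁻¹ * r y) := by
    intro y hy
    have h2p : 0 < h₂' y := hp2' y hy
    have h1 : Pint f c W y
        = ∫ x' in (0:ℝ)..1, h₂' 0 * ((h₂' y)⁻¹ * (h₁' x' * f x' y * h₂' y)) := by
      apply intervalIntegral.integral_congr
      intro x' hx'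
      rw [Set.uIcc_of_le h01] at hx'
      show f x' y * Real.exp (vfun f c W x') = h₂' 0 * ((h₂' y)⁻¹ * (h₁' x' * f x' y * h₂' y))
      rw [hvW x' hx']
      have e1 : h₁' x' * f x' y * h₂' y = h₂' y * (h₁' x' * f x' y) := by ring
      rw [e1, inv_mul_cancel_left₀ h2p.ne']
      ring
    rw [h1, intervalIntegral.integral_const_mul, intervalIntegral.integral_const_mul,
      hrow' y hy]
  have hUW : ∀ y ∈ Icc (0:ℝ) 1, Ufun f r c W y = W y := by
    intro y hy
    have h2p : 0 < h₂' y := hp2' y hy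
    simp only [Ufun]
    rw [hPW y hy, Real.log_mul h20.ne' (mul_pos (inv_pos.2 h2p) (hrp y)).ne',
      Real.log_mul (inv_pos.2 h2p).ne' (hrp y).ne',
      Real.log_inv, hWval y hy, hadef]
    ring
  have hfixW : ∀ z ∈ Icc (0:ℝ) 1, Tfun f r c W z = W z := by
    intro z hz
    simp only [Tfun]
    rw [hUW z hz, hUW 0 h0m, hWval 0 h0m, hadef]
    ring
  have hmem' : u' ∈ X := by
    constructor
    · show Real.log (h₂' (pt0 : ℝ)) - a = 0
      rw [hpt0, hadef]
      simp
    · show ‖u'‖ ≤ R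
      rw [ContinuousMap.norm_le _ hR0]
      intro z
      rw [Real.norm_eq_abs]
      have h1 : u' z = Tfun f r c W z := by
        rw [hfixW z z.2, hWval z z.2]
        rfl
      rw [h1]
      exact Tbound hf hWc hb hfl hfu hc hcp hrp hmr0
        (fun y hy => hrmin y hy) (fun y hy => hrmax y hy) z.2
  have hfixTm : Tm ⟨u', hmem'⟩ = ⟨u', hmem'⟩ := by
    apply Subtype.ext
    apply ContinuousMap.ext
    intro z
    show Tfun f r c (IccExtend h01 u') z = u' z
    rw [← hWdef, hfixW z z.2, hWval z z.2]
    rfl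
  have hxeq : (⟨u', hmem'⟩ : ↥X) = x := hxuniq _ hfixTm
  have hu'x : u' = ((x : ↥X) : C(Icc (0:ℝ) 1, ℝ)) := congrArg Subtype.val hxeq
  have hWU : W = Ux := by rw [hWdef, hUx, hu'x]
  refine ⟨(h₂' 0)⁻¹, by positivity, ?_, ?_⟩
  · intro x' hx'
    have h1 := hvW x' hx'
    rw [hWU] at h1
    have : h₁ x' = h₂' 0 * h₁' x' := by simp only [hh₁]; exact h1
    rw [this]
    field_simp
  · intro y hy
    have h1 := hexpW y hy
    rw [hWU] at h1
    simp only [hh₂]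
    rw [h1]
    ring


/-- continuous density scaling: a bounded, continuous, strictly
positive density on the unit square can be scaled by positive functions h₁, h₂
to attain prescribed positive continuous marginals r and c with equal total
mass; the pair (h₁, h₂) is unique up to a scalar factor. In particular, in the
symmetric case with r = c = m, there is a unique positive balancing function. -/
theorem continuous_scaling (f : ℝ → ℝ → ℝ)
    (hfc : ContinuousOn (fun p : ℝ × ℝ => f p.1 p.2)
      (Set.Icc 0 1 ×ˢ Set.Icc 0 1))
    (hfb : ∃ B : ℝ, ∀ x ∈ Set.Icc (0:ℝ) 1, ∀ y ∈ Set.Icc (0:ℝ) 1, f x y ≤ B)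
    (hfpos : ∀ x ∈ Set.Icc (0:ℝ) 1, ∀ y ∈ Set.Icc (0:ℝ) 1, 0 < f x y)
    (r c : ℝ → ℝ)
    (hrc : ContinuousOn r (Set.Icc 0 1)) (hcc : ContinuousOn c (Set.Icc 0 1))
    (hrpos : ∀ y ∈ Set.Icc (0:ℝ) 1, 0 < r y)
    (hcpos : ∀ x ∈ Set.Icc (0:ℝ) 1, 0 < c x)
    (hmass : (∫ y in (0:ℝ)..1, r y) = ∫ x in (0:ℝ)..1, c x) :
    (∃ h₁ h₂ : ℝ → ℝ,
      ContinuousOn h₁ (Set.Icc 0 1) ∧ ContinuousOn h₂ (Set.Icc 0 1) ∧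
      (∀ x ∈ Set.Icc (0:ℝ) 1, 0 < h₁ x) ∧ (∀ y ∈ Set.Icc (0:ℝ) 1, 0 < h₂ y) ∧
      (∀ y ∈ Set.Icc (0:ℝ) 1, ∫ x in (0:ℝ)..1, h₁ x * f x y * h₂ y = r y) ∧
      (∀ x ∈ Set.Icc (0:ℝ) 1, ∫ y in (0:ℝ)..1, h₁ x * f x y * h₂ y = c x) ∧
      (∀ h₁' h₂' : ℝ → ℝ,
        ContinuousOn h₁' (Set.Icc 0 1) → ContinuousOn h₂' (Set.Icc 0 1) →
        (∀ x ∈ Set.Icc (0:ℝ) 1, 0 < h₁' x) →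
        (∀ y ∈ Set.Icc (0:ℝ) 1, 0 < h₂' y) →
        (∀ y ∈ Set.Icc (0:ℝ) 1, ∫ x in (0:ℝ)..1, h₁' x * f x y * h₂' y = r y) →
        (∀ x ∈ Set.Icc (0:ℝ) 1, ∫ y in (0:ℝ)..1, h₁' x * f x y * h₂' y = c x) →
        ∃ α : ℝ, 0 < α ∧ (∀ x ∈ Set.Icc (0:ℝ) 1, h₁' x = α * h₁ x) ∧
          (∀ y ∈ Set.Icc (0:ℝ) 1, α * h₂' y = h₂ y)))
    ∧
    ((∀ x y, f x y = f y x) → r = c →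
      ∃ h : ℝ → ℝ, ContinuousOn h (Set.Icc 0 1) ∧
        (∀ x ∈ Set.Icc (0:ℝ) 1, 0 < h x) ∧
        (∀ y ∈ Set.Icc (0:ℝ) 1, ∫ x in (0:ℝ)..1, h x * f x y * h y = r y) ∧
        (∀ x ∈ Set.Icc (0:ℝ) 1, ∫ y in (0:ℝ)..1, h x * f x y * h y = r x) ∧
        (∀ h' : ℝ → ℝ, ContinuousOn h' (Set.Icc 0 1) →
          (∀ x ∈ Set.Icc (0:ℝ) 1, 0 < h' x) →
          (∀ y ∈ Set.Icc (0:ℝ) 1, ∫ x in (0:ℝ)..1, h' x * f x y * h' y = r y) →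
          (∀ x ∈ Set.Icc (0:ℝ) 1, ∫ y in (0:ℝ)..1, h' x * f x y * h' y = r x) →
          ∀ x ∈ Set.Icc (0:ℝ) 1, h' x = h x)) := by
  have h01 : (0:ℝ) ≤ 1 := zero_le_one
  -- continuous projection onto [0,1]
  set P : ℝ → ℝ := fun z => (Set.projIcc (0:ℝ) 1 h01 z : ℝ) with hP
  have hPc : Continuous P := continuous_subtype_val.comp continuous_projIcc
  have hPmem : ∀ z, P z ∈ Icc (0:ℝ) 1 := fun z => (Set.projIcc (0:ℝ) 1 h01 z).2
  have hPid : ∀ z ∈ Icc (0:ℝ) 1, P z = z := by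
    intro z hz
    rw [hP]
    simp only [Set.projIcc_of_mem h01 hz]
  -- global extensions
  set fe : ℝ → ℝ → ℝ := fun x y => f (P x) (P y) with hfe
  set re : ℝ → ℝ := fun y => r (P y) with hre
  set ce : ℝ → ℝ := fun x => c (P x) with hce
  have hfec : Continuous fun p : ℝ × ℝ => fe p.1 p.2 := by
    apply hfc.comp_continuous ((hPc.comp continuous_fst).prodMk (hPc.comp continuous_snd))
    intro p
    exact ⟨hPmem p.1, hPmem p.2⟩
  have hrec : Continuous re := hrc.comp_continuous hPc hPmem
  have hcec : Continuous ce := hcc.comp_continuous hPc hPmem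
  have hfeeq : ∀ x ∈ Icc (0:ℝ) 1, ∀ y ∈ Icc (0:ℝ) 1, fe x y = f x y := by
    intro x hx y hy
    rw [hfe]
    simp only [hPid x hx, hPid y hy]
  have hreeq : ∀ y ∈ Icc (0:ℝ) 1, re y = r y := fun y hy => by
    rw [hre]; simp only [hPid y hy]
  have hceeq : ∀ x ∈ Icc (0:ℝ) 1, ce x = c x := fun x hx => by
    rw [hce]; simp only [hPid x hx]
  -- bounds for fe
  obtain ⟨q, hq, hqmin⟩ := (isCompact_Icc.prod isCompact_Icc).exists_isMinOn
    (Set.Nonempty.prod (nonempty_Icc.2 h01) (nonempty_Icc.2 h01)) hfc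
  set b := f q.1 q.2 with hbdef
  have hb : 0 < b := hfpos q.1 hq.1 q.2 hq.2
  have hfel : ∀ x y, b ≤ fe x y := by
    intro x y
    exact hqmin (Set.mk_mem_prod (hPmem x) (hPmem y))
  obtain ⟨B, hB⟩ := hfb
  have hfeu : ∀ x y, fe x y ≤ B := fun x y => hB (P x) (hPmem x) (P y) (hPmem y)
  have hrep : ∀ y, 0 < re y := fun y => hrpos (P y) (hPmem y)
  have hcep : ∀ x, 0 < ce x := fun x => hcpos (P x) (hPmem x)
  have hmasse : (∫ y in (0:ℝ)..1, re y) = ∫ x in (0:ℝ)..1, ce x := by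
    have e1 : (∫ y in (0:ℝ)..1, re y) = ∫ y in (0:ℝ)..1, r y := by
      apply intervalIntegral.integral_congr
      intro y hy; rw [Set.uIcc_of_le h01] at hy; exact hreeq y hy
    have e2 : (∫ x in (0:ℝ)..1, ce x) = ∫ x in (0:ℝ)..1, c x := by
      apply intervalIntegral.integral_congr
      intro x hx; rw [Set.uIcc_of_le h01] at hx; exact hceeq x hx
    rw [e1, e2, hmass]
  obtain ⟨h₁, h₂, hc1, hc2, hp1, hp2, hm1, hm2, huniq⟩ :=
    sinkhorn_aux fe hfec b B hb hfel hfeu re ce hrec hcec hrep hcep hmasse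
  -- part 1 transferred to f
  have part1 : ∃ h₁ h₂ : ℝ → ℝ,
      ContinuousOn h₁ (Set.Icc 0 1) ∧ ContinuousOn h₂ (Set.Icc 0 1) ∧
      (∀ x ∈ Set.Icc (0:ℝ) 1, 0 < h₁ x) ∧ (∀ y ∈ Set.Icc (0:ℝ) 1, 0 < h₂ y) ∧
      (∀ y ∈ Set.Icc (0:ℝ) 1, ∫ x in (0:ℝ)..1, h₁ x * f x y * h₂ y = r y) ∧
      (∀ x ∈ Set.Icc (0:ℝ) 1, ∫ y in (0:ℝ)..1, h₁ x * f x y * h₂ y = c x) ∧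
      (∀ h₁' h₂' : ℝ → ℝ,
        ContinuousOn h₁' (Set.Icc 0 1) → ContinuousOn h₂' (Set.Icc 0 1) →
        (∀ x ∈ Set.Icc (0:ℝ) 1, 0 < h₁' x) →
        (∀ y ∈ Set.Icc (0:ℝ) 1, 0 < h₂' y) →
        (∀ y ∈ Set.Icc (0:ℝ) 1, ∫ x in (0:ℝ)..1, h₁' x * f x y * h₂' y = r y) →
        (∀ x ∈ Set.Icc (0:ℝ) 1, ∫ y in (0:ℝ)..1, h₁' x * f x y * h₂' y = c x) →
        ∃ α : ℝ, 0 < α ∧ (∀ x ∈ Set.Icc (0:ℝ) 1, h₁' x = α * h₁ x) ∧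
          (∀ y ∈ Set.Icc (0:ℝ) 1, α * h₂' y = h₂ y)) := by
    refine ⟨h₁, h₂, hc1.continuousOn, hc2.continuousOn, fun x _ => hp1 x, fun y _ => hp2 y,
      ?_, ?_, ?_⟩
    · intro y hy
      rw [← hreeq y hy, ← hm1 y hy]
      apply intervalIntegral.integral_congr
      intro x hx; rw [Set.uIcc_of_le h01] at hx
      beta_reduce
      rw [hfeeq x hx y hy]
    · intro x hx
      rw [← hceeq x hx, ← hm2 x]
      apply intervalIntegral.integral_congr
      intro y hy; rw [Set.uIcc_of_le h01] at hy
      beta_reduce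
      rw [hfeeq x hx y hy]
    · intro h₁' h₂' hc1' hc2' hp1' hp2' hrow' hcol'
      apply huniq h₁' h₂' hc1' hc2' hp1' hp2'
      · intro y hy
        rw [hreeq y hy, ← hrow' y hy]
        apply intervalIntegral.integral_congr
        intro x hx; rw [Set.uIcc_of_le h01] at hx
        beta_reduce
        rw [hfeeq x hx y hy]
      · intro x hx
        rw [hceeq x hx, ← hcol' x hx]
        apply intervalIntegral.integral_congr
        intro y hy; rw [Set.uIcc_of_le h01] at hy
        beta_reduce
        rw [hfeeq x hx y hy]
  refine ⟨part1, ?_⟩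
  -- symmetric case
  intro hsym hreq
  subst hreq
  obtain ⟨g₁, g₂, hgc1, hgc2, hgp1, hgp2, hgm1, hgm2, hguniq⟩ := part1
  -- (g₂, g₁) is also a solution
  have hswap1 : ∀ y ∈ Set.Icc (0:ℝ) 1, (∫ x in (0:ℝ)..1, g₂ x * f x y * g₁ y) = r y := by
    intro y hy
    have e1 : (∫ x in (0:ℝ)..1, g₂ x * f x y * g₁ y)
        = ∫ x in (0:ℝ)..1, g₁ y * f y x * g₂ x := by
      apply intervalIntegral.integral_congr
      intro x _
      beta_reduce
      rw [hsym x y]; ring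
    rw [e1, ← hgm2 y hy]
  have hswap2 : ∀ x ∈ Set.Icc (0:ℝ) 1, (∫ y in (0:ℝ)..1, g₂ x * f x y * g₁ y) = r x := by
    intro x hx
    have e1 : (∫ y in (0:ℝ)..1, g₂ x * f x y * g₁ y)
        = ∫ y in (0:ℝ)..1, g₁ y * f y x * g₂ x := by
      apply intervalIntegral.integral_congr
      intro y _
      beta_reduce
      rw [hsym x y]; ring
    rw [e1, ← hgm1 x hx]
  obtain ⟨α, hα, hαa, hαb⟩ := hguniq g₂ g₁ hgc2 hgc1 hgp2 hgp1 hswap1 hswap2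
  set h : ℝ → ℝ := fun z => Real.sqrt α * g₁ z with hh
  have hsq : Real.sqrt α * Real.sqrt α = α := Real.mul_self_sqrt hα.le
  have hsqpos : 0 < Real.sqrt α := Real.sqrt_pos.2 hα
  have hptwise : ∀ x y, y ∈ Set.Icc (0:ℝ) 1 → h x * f x y * h y = g₁ x * f x y * g₂ y := by
    intro x y hy
    rw [hh]
    have := hαb y hy
    calc Real.sqrt α * g₁ x * f x y * (Real.sqrt α * g₁ y)
        = g₁ x * f x y * (Real.sqrt α * Real.sqrt α * g₁ y) := by ring
      _ = g₁ x * f x y * (α * g₁ y) := by rw [hsq]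
      _ = g₁ x * f x y * g₂ y := by rw [hαb y hy]
  refine ⟨h, continuousOn_const.mul hgc1, fun x hx => mul_pos hsqpos (hgp1 x hx), ?_, ?_, ?_⟩
  · intro y hy
    rw [← hgm1 y hy]
    apply intervalIntegral.integral_congr
    intro x _
    beta_reduce
    exact hptwise x y hy
  · intro x hx
    rw [← hgm2 x hx]
    apply intervalIntegral.integral_congr
    intro y hy
    rw [Set.uIcc_of_le h01] at hy
    beta_reduce
    exact hptwise x y hy
  · intro h' hch' hph' hm1' hm2'
    obtain ⟨β, hβ, hβa, hβb⟩ := hguniq h' h' hch' hch' hph' hph' hm1' hm2'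
    intro x hx
    have e1 := hβa x hx
    have e2 := hβb x hx
    have e3 := hαa x hx
    have hg0 := (hgp1 x hx).ne'
    have h4 : (β * β) * g₁ x = α * g₁ x := by
      rw [mul_assoc, ← e1, e2, e3]
    have hβ2 : β * β = α := mul_right_cancel₀ hg0 h4
    have h5 : Real.sqrt α = β := by rw [← hβ2, Real.sqrt_mul_self hβ.le]
    rw [e1, hh, h5]
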